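/- Let S be an inverse semigroup with zero and let L(S) be its groupoid of proper filters. For nonzero a, let U_a denote the set of proper filters containing a. Then U_a U_b = U_{ab}, where the product of sets of filters uses the groupoid composition A·B = (AB)↑ defined when d(A) = r(B). -/

import Mathlib

/-- An inverse semigroup: every element has a unique (generalized) inverse. -/
class InverseSemigroup (S : Type*) extends Semigroup S, Inv S where
  mul_inv_mul : ∀ s : S, s * s⁻¹ * s = s
  inv_mul_inv : ∀ s : S, s⁻¹ * s * s⁻¹ = s⁻¹
  inv_unique : ∀ s t : S, s * t * s = s → t * s * t = t → t = s⁻¹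

/-- An inverse semigroup with a zero element. -/
class InverseSemigroupWithZero (S : Type*) extends InverseSemigroup S, Zero S where
  zero_mul : ∀ s : S, 0 * s = 0
  mul_zero : ∀ s : S, s * 0 = 0

section Defs
variable {S : Type*}

/-- The natural partial order on an inverse semigroup: `a ≤ b` iff `a = b (a⁻¹ a)`. -/
def nle [InverseSemigroup S] (a b : S) : Prop := a = b * (a⁻¹ * a)

/-- Compatibility: `a⁻¹ b` and `a b⁻¹` are both idempotent. -/
def compat [InverseSemigroup S] (a b : S) : Prop :=
  IsIdempotentElem (a⁻¹ * b) ∧ IsIdempotentElem (a * b⁻¹)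

/-- Orthogonality: `a⁻¹ b = 0 = a b⁻¹`. -/
def orth [InverseSemigroupWithZero S] (a b : S) : Prop := a⁻¹ * b = 0 ∧ a * b⁻¹ = 0

/-- `u` is the least upper bound (join) of `a` and `b` in the natural partial order. -/
def isJoin [InverseSemigroup S] (u a b : S) : Prop :=
  nle a u ∧ nle b u ∧ ∀ c, nle a c → nle b c → nle u c

/-- `m` is the greatest lower bound (meet) of `a` and `b` in the natural partial order. -/
def isMeet [InverseSemigroup S] (m a b : S) : Prop :=
  nle m a ∧ nle m b ∧ ∀ c, nle c a → nle c b → nle c m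

/-- `c = a ∖ b`: `c ≤ a`, `c ⊥ b` and `a = b ∨ c`. -/
def isDiff [InverseSemigroupWithZero S] (c a b : S) : Prop :=
  nle c a ∧ orth c b ∧ isJoin a b c

end Defs

/-- A distributive inverse semigroup: compatible pairs have joins, and
multiplication distributes over such joins. -/
class DistributiveInverseSemigroup (S : Type*) extends InverseSemigroupWithZero S where
  join_exists : ∀ a b : S, compat a b → ∃ u, isJoin u a b
  mul_join_left : ∀ a b u c : S, isJoin u a b → isJoin (c * u) (c * a) (c * b)
  mul_join_right : ∀ a b u c : S, isJoin u a b → isJoin (u * c) (a * c) (b * c)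

/-- A Boolean inverse semigroup: a distributive inverse semigroup whose idempotents
form a (generalized) Boolean algebra, i.e. relative complements of idempotents exist. -/
class BooleanInverseSemigroup (S : Type*) extends DistributiveInverseSemigroup S where
  relcomp : ∀ e f : S, IsIdempotentElem e → IsIdempotentElem f → nle f e →
    ∃ c, IsIdempotentElem c ∧ isDiff c e f

section Stmt11
variable {S : Type*} [InverseSemigroupWithZero S]

/-- Upward closure of a subset. -/
def upcl (X : Set S) : Set S := {s : S | ∃ x ∈ X, nle x s}

/-- Pointwise product of subsets. -/
def smul (X Y : Set S) : Set S := {z : S | ∃ x ∈ X, ∃ y ∈ Y, z = x * y}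

/-- Pointwise inverse of a subset. -/
def sinv (X : Set S) : Set S := {s : S | s⁻¹ ∈ X}

/-- A proper filter of `S`: nonempty, omits `0`, upward closed, downward directed. -/
def IsProperFilter (F : Set S) : Prop :=
  F.Nonempty ∧ (0 : S) ∉ F ∧ (∀ a ∈ F, ∀ b : S, nle a b → b ∈ F) ∧
    ∀ a ∈ F, ∀ b ∈ F, ∃ c ∈ F, nle c a ∧ nle c b

/-- `d(A) = (A⁻¹A)↑`. -/
def dF (A : Set S) : Set S := upcl (smul (sinv A) A)

/-- `r(A) = (AA⁻¹)↑`. -/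
def rF (A : Set S) : Set S := upcl (smul A (sinv A))

/-- `U_a`: the set of proper filters containing `a`. -/
def UU (a : S) : Set (Set S) := {A : Set S | IsProperFilter A ∧ a ∈ A}

end Stmt11

namespace ISG
variable {S : Type*} [InverseSemigroup S] {a b c d e f : S}

lemma mim (s : S) : s * s⁻¹ * s = s := InverseSemigroup.mul_inv_mul s
lemma imi (s : S) : s⁻¹ * s * s⁻¹ = s⁻¹ := InverseSemigroup.inv_mul_inv s

lemma inv_inv' (s : S) : s⁻¹⁻¹ = s :=
  ((InverseSemigroup.inv_unique s⁻¹ s (imi s) (mim s))).symm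

lemma idem_inv (he : IsIdempotentElem e) : e⁻¹ = e :=
  (InverseSemigroup.inv_unique e e (by rw [he, he]) (by rw [he, he])).symm

lemma idm (he : IsIdempotentElem e) (t : S) : e * (e * t) = e * t := by
  rw [← mul_assoc, he]

lemma idem_aa (a : S) : IsIdempotentElem (a * a⁻¹) := by
  show _ = _; rw [mul_assoc, ← mul_assoc a⁻¹, imi]

lemma idem_ia (a : S) : IsIdempotentElem (a⁻¹ * a) := by
  show _ = _; rw [mul_assoc, ← mul_assoc a, mim]

lemma idem_mul_aux (he : IsIdempotentElem e) (hf : IsIdempotentElem f) :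
    IsIdempotentElem (e * f) := by
  set x := (e * f)⁻¹ with hx
  have h1 : (e * f) * (f * x * e) * (e * f) = e * f := by
    have h := mim (e * f); rw [← hx] at h
    simp only [mul_assoc] at h ⊢
    rw [idm hf, idm he]; exact h
  have himi : x * (e * (f * x)) = x := by
    have h := imi (e * f); rw [← hx] at h
    simp only [mul_assoc] at h; exact h
  have h' : x * (e * (f * (x * e))) = x * e := by
    have := congrArg (fun z => z * e) himi
    simp only [mul_assoc] at this; exact this
  have h2 : (f * x * e) * (e * f) * (f * x * e) = f * x * e := by
    simp only [mul_assoc]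
    rw [idm he, idm hf, h']
  have hxe : f * x * e = x := InverseSemigroup.inv_unique (e * f) (f * x * e) h1 h2
  have hxid : IsIdempotentElem x := by
    show x * x = x
    calc x * x = (f * x * e) * (f * x * e) := by rw [hxe]
    _ = f * (x * (e * (f * (x * e)))) := by simp only [mul_assoc]
    _ = f * (x * e) := by rw [h']
    _ = x := by rw [← mul_assoc, hxe]
  have hef : e * f = x := by
    rw [← inv_inv' (e * f), ← hx, idem_inv hxid]
  rw [hef]; exact hxid

lemma idem_mul_comm (he : IsIdempotentElem e) (hf : IsIdempotentElem f) :
    e * f = f * e := by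
  have hefid := idem_mul_aux he hf
  have hfeid := idem_mul_aux hf he
  have h3 : (e * f) * (f * e) * (e * f) = e * f := by
    have : (e * f) * (f * e) * (e * f) = e * (f * (f * (e * (e * f)))) := by
      simp only [mul_assoc]
    rw [this, idm hf, idm he, ← mul_assoc, hefid]
  have h4 : (f * e) * (e * f) * (f * e) = f * e := by
    have : (f * e) * (e * f) * (f * e) = f * (e * (e * (f * (f * e)))) := by
      simp only [mul_assoc]
    rw [this, idm he, idm hf, ← mul_assoc, hfeid]
  have h5 := InverseSemigroup.inv_unique (e * f) (f * e) h3 h4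
  have h6 : (e * f)⁻¹ = e * f := idem_inv hefid
  rw [h6] at h5
  exact h5.symm

lemma mul_inv_rev' (a b : S) : (a * b)⁻¹ = b⁻¹ * a⁻¹ := by
  have h1 : (a * b) * (b⁻¹ * a⁻¹) * (a * b) = a * b := by
    have : (a * b) * (b⁻¹ * a⁻¹) * (a * b) = a * ((b * b⁻¹) * (a⁻¹ * a)) * b := by
      simp only [mul_assoc]
    rw [this, idem_mul_comm (idem_aa b) (idem_ia a)]
    calc a * (a⁻¹ * a * (b * b⁻¹)) * b = (a * a⁻¹ * a) * (b * b⁻¹ * b) := by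
          simp only [mul_assoc]
    _ = a * b := by rw [mim, mim]
  have h2 : (b⁻¹ * a⁻¹) * (a * b) * (b⁻¹ * a⁻¹) = b⁻¹ * a⁻¹ := by
    have : (b⁻¹ * a⁻¹) * (a * b) * (b⁻¹ * a⁻¹) = b⁻¹ * ((a⁻¹ * a) * (b * b⁻¹)) * a⁻¹ := by
      simp only [mul_assoc]
    rw [this, idem_mul_comm (idem_ia a) (idem_aa b)]
    calc b⁻¹ * (b * b⁻¹ * (a⁻¹ * a)) * a⁻¹ = (b⁻¹ * b * b⁻¹) * (a⁻¹ * a * a⁻¹) := by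
          simp only [mul_assoc]
    _ = b⁻¹ * a⁻¹ := by rw [imi, imi]
  exact (InverseSemigroup.inv_unique (a * b) (b⁻¹ * a⁻¹) h1 h2).symm

section Ord
variable {S : Type*} [InverseSemigroup S] {a b c d e f g : S}


lemma nle_refl (a : S) : nle a a := by
  show a = a * (a⁻¹ * a); rw [← mul_assoc, mim]

lemma nle_of_mul_idem (hf : IsIdempotentElem f) (h : a = b * f) : nle a b := by
  have hai : a⁻¹ = f * b⁻¹ := by rw [h, mul_inv_rev', idem_inv hf]
  have key : f * (b⁻¹ * b) = (b⁻¹ * b) * f := idem_mul_comm hf (idem_ia b)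
  have hh : b * (a⁻¹ * a) = b * f := by
    rw [hai, h]
    calc b * (f * b⁻¹ * (b * f)) = b * (f * (b⁻¹ * b) * f) := by simp only [mul_assoc]
    _ = b * ((b⁻¹ * b) * f * f) := by rw [key]
    _ = (b * (b⁻¹ * b)) * (f * f) := by simp only [mul_assoc]
    _ = b * f := by rw [hf, ← mul_assoc, mim]
  exact h.trans hh.symm

lemma nle_of_idem_mul (he : IsIdempotentElem e) (h : a = e * b) : nle a b := by
  have hai : a⁻¹ = b⁻¹ * e := by rw [h, mul_inv_rev', idem_inv he]
  have hh : b * (a⁻¹ * a) = e * b := by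
    rw [hai, h]
    calc b * (b⁻¹ * e * (e * b)) = (b * b⁻¹) * (e * e) * b := by simp only [mul_assoc]
    _ = (b * b⁻¹) * e * b := by rw [he]
    _ = e * (b * b⁻¹) * b := by rw [idem_mul_comm (idem_aa b) he]
    _ = e * (b * b⁻¹ * b) := by simp only [mul_assoc]
    _ = e * b := by rw [mim]
  exact h.trans hh.symm

lemma nle_inv (h : nle a b) : nle a⁻¹ b⁻¹ := by
  have h' : a⁻¹ = (a⁻¹ * a) * b⁻¹ := by
    conv_lhs => rw [h]
    rw [mul_inv_rev', idem_inv (idem_ia a)]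
  exact nle_of_idem_mul (idem_ia a) h'

lemma nle_trans (h1 : nle a b) (h2 : nle b c) : nle a c := by
  have h3 : a = c * ((b⁻¹ * b) * (a⁻¹ * a)) := by
    conv_lhs => rw [h1]
    conv_lhs => rw [h2]
    simp only [mul_assoc]
  exact nle_of_mul_idem (idem_mul_aux (idem_ia b) (idem_ia a)) h3

lemma nle_left (h : nle a b) : a = (a * a⁻¹) * b := by
  have h' : a⁻¹ = b⁻¹ * (a⁻¹⁻¹ * a⁻¹) := nle_inv h
  rw [inv_inv'] at h'
  have h2 := congrArg (fun z : S => z⁻¹) h'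
  rw [inv_inv', mul_inv_rev', inv_inv', idem_inv (idem_aa a)] at h2
  exact h2

lemma conj_idem (hg : IsIdempotentElem g) (d : S) : IsIdempotentElem (d⁻¹ * (g * d)) := by
  have hcomm : g * (d * d⁻¹) = (d * d⁻¹) * g := idem_mul_comm hg (idem_aa d)
  show _ = _
  calc d⁻¹ * (g * d) * (d⁻¹ * (g * d)) = d⁻¹ * (g * (d * d⁻¹) * (g * d)) := by
        simp only [mul_assoc]
  _ = d⁻¹ * ((d * d⁻¹) * g * (g * d)) := by rw [hcomm]
  _ = (d⁻¹ * d * d⁻¹) * (g * (g * d)) := by simp only [mul_assoc]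
  _ = d⁻¹ * (g * (g * d)) := by rw [imi]
  _ = d⁻¹ * (g * d) := by rw [idm hg]

lemma idem_shift (hg : IsIdempotentElem g) (d : S) : g * d = d * (d⁻¹ * (g * d)) := by
  have hcomm : g * (d * d⁻¹) = (d * d⁻¹) * g := idem_mul_comm hg (idem_aa d)
  calc g * d = g * (d * d⁻¹ * d) := by rw [mim]
  _ = (g * (d * d⁻¹)) * d := by simp only [mul_assoc]
  _ = ((d * d⁻¹) * g) * d := by rw [hcomm]
  _ = d * (d⁻¹ * (g * d)) := by simp only [mul_assoc]

lemma nle_mul (h1 : nle a b) (h2 : nle c d) : nle (a * c) (b * d) := by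
  have ha : a = b * (a⁻¹ * a) := h1
  have hc : c = (c * c⁻¹) * d := nle_left h2
  have hg : IsIdempotentElem ((a⁻¹ * a) * (c * c⁻¹)) := idem_mul_aux (idem_ia a) (idem_aa c)
  apply nle_of_mul_idem (conj_idem hg d)
  calc a * c = (b * (a⁻¹ * a)) * ((c * c⁻¹) * d) := by
        conv_lhs => rw [ha]
        conv_lhs => rw [hc]
  _ = b * (((a⁻¹ * a) * (c * c⁻¹)) * d) := by simp only [mul_assoc]
  _ = b * (d * (d⁻¹ * (((a⁻¹ * a) * (c * c⁻¹)) * d))) := by rw [← idem_shift hg d]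
  _ = (b * d) * (d⁻¹ * ((a⁻¹ * a) * (c * c⁻¹) * d)) := by simp only [mul_assoc]

lemma nle_eq_mul (he : IsIdempotentElem e) (h : nle e f) : e = f * e := by
  have h' : e = f * (e⁻¹ * e) := h
  rw [idem_inv he, he] at h'
  exact h'

end Ord

section ZeroPart
variable {S : Type*} [InverseSemigroupWithZero S] {x y : S}

lemma nle_zero (h : nle x (0 : S)) : x = 0 := by
  have hx : x = 0 * (x⁻¹ * x) := h
  rw [InverseSemigroupWithZero.zero_mul] at hx
  exact hx

lemma mem_upcl {X : Set S} (hx : x ∈ X) (h : nle x y) : y ∈ upcl X := ⟨x, hx, h⟩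

lemma self_mem_upcl {X : Set S} (hx : x ∈ X) : x ∈ upcl X := ⟨x, hx, nle_refl x⟩

lemma upcl_filter {G : Set S} (hne : G.Nonempty) (h0 : (0 : S) ∉ upcl G)
    (hdir : ∀ x ∈ G, ∀ y ∈ G, ∃ z ∈ G, nle z x ∧ nle z y) :
    IsProperFilter (upcl G) := by
  obtain ⟨g, hg⟩ := hne
  refine ⟨⟨g, self_mem_upcl hg⟩, h0, ?_, ?_⟩
  · rintro p ⟨q, hq, hqp⟩ r hpr
    exact ⟨q, hq, nle_trans hqp hpr⟩
  · rintro p ⟨q, hq, hqp⟩ r ⟨t, ht, htr⟩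
    obtain ⟨z, hz, hz1, hz2⟩ := hdir q hq t ht
    exact ⟨z, self_mem_upcl hz, nle_trans hz1 hqp, nle_trans hz2 htr⟩

lemma dir3 {C : Set S} (hC : IsProperFilter C) {p q r : S}
    (h1 : p ∈ C) (h2 : q ∈ C) (h3 : r ∈ C) :
    ∃ z ∈ C, nle z p ∧ nle z q ∧ nle z r := by
  obtain ⟨w, hw, hwp, hwq⟩ := hC.2.2.2 p h1 q h2
  obtain ⟨z, hz, hzw, hzr⟩ := hC.2.2.2 w hw r h3
  exact ⟨z, hz, nle_trans hzw hwp, nle_trans hzw hwq, hzr⟩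

lemma mim' (s t : S) : s * (s⁻¹ * (s * t)) = s * t := by
  rw [← mul_assoc, ← mul_assoc, mim]

lemma imi' (s t : S) : s⁻¹ * (s * (s⁻¹ * t)) = s⁻¹ * t := by
  rw [← mul_assoc, ← mul_assoc, imi]

lemma sandwich (b c : S) : (b * c⁻¹) * (c * b⁻¹) = b * (c⁻¹ * c) * b⁻¹ := by
  simp only [mul_assoc]

lemma uu_eq (b c : S) :
    (b * (c⁻¹ * c)) * (b * (c⁻¹ * c))⁻¹ = (b * c⁻¹) * (c * b⁻¹) := by
  rw [mul_inv_rev', idem_inv (idem_ia c)]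
  simp only [mul_assoc]
  rw [imi']

lemma split3 (b c : S) :
    b * (c⁻¹ * c) * b⁻¹ = (b * (c⁻¹ * c)) * ((c⁻¹ * c) * b⁻¹) := by
  simp only [mul_assoc]
  rw [imi']

lemma keybb {a b c : S} (h : nle c (a * b)) : c * (b⁻¹ * b) = c := by
  have hc : c = a * b * (c⁻¹ * c) := h
  have hcomm : (c⁻¹ * c) * (b⁻¹ * b) = (b⁻¹ * b) * (c⁻¹ * c) :=
    idem_mul_comm (idem_ia c) (idem_ia b)
  calc c * (b⁻¹ * b) = (a * b * (c⁻¹ * c)) * (b⁻¹ * b) := by conv_lhs => rw [hc]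
  _ = (a * b) * ((c⁻¹ * c) * (b⁻¹ * b)) := by simp only [mul_assoc]
  _ = (a * b) * ((b⁻¹ * b) * (c⁻¹ * c)) := by rw [hcomm]
  _ = a * (b * (b⁻¹ * (b * (c⁻¹ * c)))) := by simp only [mul_assoc]
  _ = a * (b * (c⁻¹ * c)) := by rw [mim']
  _ = c := by rw [← mul_assoc, ← hc]

lemma zc {a b c : S} (h : nle c (a * b)) :
    (c * b⁻¹) * (b * (c⁻¹ * c)) = c := by
  have hbb := keybb h
  calc (c * b⁻¹) * (b * (c⁻¹ * c)) = (c * (b⁻¹ * b)) * (c⁻¹ * c) := by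
        simp only [mul_assoc]
  _ = c * (c⁻¹ * c) := by rw [hbb]
  _ = c := by rw [← mul_assoc, mim]

end ZeroPart
end ISG

open ISG in
/-- In the groupoid of proper filters (where `A · B = (AB)↑` is defined iff
`d(A) = r(B)`), one has `U_a U_b = U_{ab}` for nonzero `a, b`. -/
theorem stmt11 {S : Type*} [InverseSemigroupWithZero S] (a b : S)
    (ha : a ≠ 0) (hb : b ≠ 0) :
    {C : Set S | ∃ A ∈ UU a, ∃ B ∈ UU b, dF A = rF B ∧ C = upcl (smul A B)} =
      UU (a * b) := by
  ext C
  constructor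
  · -- forward: every product filter contains a*b and is a proper filter
    rintro ⟨A, ⟨hA, haA⟩, B, ⟨hB, hbB⟩, hd, rfl⟩
    have habmem : a * b ∈ smul A B := ⟨a, haA, b, hbB, rfl⟩
    refine ⟨?_, self_mem_upcl habmem⟩
    refine upcl_filter ⟨a * b, habmem⟩ ?_ ?_
    · -- 0 not in the product
      rintro ⟨z, ⟨a', ha', b', hb', rfl⟩, hz0⟩
      have hab0 : a' * b' = 0 := nle_zero hz0
      have hmem : a'⁻¹ * a' ∈ dF A := by
        refine self_mem_upcl ⟨a'⁻¹, ?_, a', ha', rfl⟩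
        show (a'⁻¹)⁻¹ ∈ A
        rw [inv_inv']; exact ha'
      rw [hd] at hmem
      obtain ⟨w, ⟨b1, hb1, s, hs, rfl⟩, hw⟩ := hmem
      -- hs : s ∈ sinv B, i.e. s⁻¹ ∈ B ; hw : nle (b1 * s) (a'⁻¹ * a')
      obtain ⟨b3, hb3, h3b', h3b1, h3s⟩ := dir3 hB hb' hb1 hs
      have h3s' : nle b3⁻¹ s := by
        have := nle_inv h3s
        rwa [inv_inv'] at this
      have hkey : nle (b3 * b3⁻¹) (a'⁻¹ * a') :=
        nle_trans (nle_mul h3b1 h3s') hw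
      have heq : b3 * b3⁻¹ = (a'⁻¹ * a') * (b3 * b3⁻¹) :=
        nle_eq_mul (idem_aa b3) hkey
      have hab3 : a' * b3 = 0 := by
        have h := nle_mul (nle_refl a') h3b'
        rw [hab0] at h
        exact nle_zero h
      have hb30 : b3 = 0 := by
        calc b3 = b3 * b3⁻¹ * b3 := (mim b3).symm
        _ = ((a'⁻¹ * a') * (b3 * b3⁻¹)) * b3 := by conv_lhs => rw [heq]
        _ = a'⁻¹ * ((a' * b3) * (b3⁻¹ * b3)) := by simp only [mul_assoc]
        _ = a'⁻¹ * (0 * (b3⁻¹ * b3)) := by rw [hab3]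
        _ = a'⁻¹ * 0 := by rw [InverseSemigroupWithZero.zero_mul]
        _ = 0 := InverseSemigroupWithZero.mul_zero _
      rw [hb30] at hb3
      exact hB.2.1 hb3
    · -- directedness of the generating set
      rintro x ⟨a1, ha1, b1, hb1, rfl⟩ y ⟨a2, ha2, b2, hb2, rfl⟩
      obtain ⟨a3, ha3, h31, h32⟩ := hA.2.2.2 a1 ha1 a2 ha2
      obtain ⟨b3, hb3, k31, k32⟩ := hB.2.2.2 b1 hb1 b2 hb2
      exact ⟨a3 * b3, ⟨a3, ha3, b3, hb3, rfl⟩, nle_mul h31 k31, nle_mul h32 k32⟩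
  · -- backward: every filter containing a*b factors
    rintro ⟨hC, habC⟩
    set GA : Set S := {x : S | ∃ c ∈ C, x = c * b⁻¹} with hGA
    set GB : Set S := {x : S | ∃ c ∈ C, x = b * (c⁻¹ * c)} with hGB
    -- A is a proper filter
    have hAfil : IsProperFilter (upcl GA) := by
      refine upcl_filter ⟨(a * b) * b⁻¹, a * b, habC, rfl⟩ ?_ ?_
      · rintro ⟨z, ⟨c, hc, rfl⟩, hz0⟩
        have hcb0 : c * b⁻¹ = 0 := nle_zero hz0
        obtain ⟨c', hc', h'c, h'ab, _⟩ := dir3 hC hc habC habC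
        have h0 : c' * b⁻¹ = 0 := by
          have h := nle_mul h'c (nle_refl (b⁻¹ : S))
          rw [hcb0] at h
          exact nle_zero h
        have : c' = 0 := by
          calc c' = c' * (b⁻¹ * b) := (keybb h'ab).symm
          _ = (c' * b⁻¹) * b := by rw [mul_assoc]
          _ = 0 * b := by rw [h0]
          _ = 0 := InverseSemigroupWithZero.zero_mul _
        rw [this] at hc'
        exact hC.2.1 hc'
      · rintro x ⟨c1, hc1, rfl⟩ y ⟨c2, hc2, rfl⟩
        obtain ⟨c3, hc3, h31, h32⟩ := hC.2.2.2 c1 hc1 c2 hc2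
        exact ⟨c3 * b⁻¹, ⟨c3, hc3, rfl⟩,
          nle_mul h31 (nle_refl _), nle_mul h32 (nle_refl _)⟩
    -- B is a proper filter
    have hBfil : IsProperFilter (upcl GB) := by
      refine upcl_filter ⟨b * ((a * b)⁻¹ * (a * b)), a * b, habC, rfl⟩ ?_ ?_
      · rintro ⟨z, ⟨c, hc, rfl⟩, hz0⟩
        have hcb0 : b * (c⁻¹ * c) = 0 := nle_zero hz0
        obtain ⟨c', hc', h'c, h'ab, _⟩ := dir3 hC hc habC habC
        have h0 : b * (c'⁻¹ * c') = 0 := by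
          have h := nle_mul (nle_refl b) (nle_mul (nle_inv h'c) h'c)
          rw [hcb0] at h
          exact nle_zero h
        have : c' = 0 := by
          calc c' = a * b * (c'⁻¹ * c') := h'ab
          _ = a * (b * (c'⁻¹ * c')) := by rw [mul_assoc]
          _ = a * 0 := by rw [h0]
          _ = 0 := InverseSemigroupWithZero.mul_zero _
        rw [this] at hc'
        exact hC.2.1 hc'
      · rintro x ⟨c1, hc1, rfl⟩ y ⟨c2, hc2, rfl⟩
        obtain ⟨c3, hc3, h31, h32⟩ := hC.2.2.2 c1 hc1 c2 hc2
        exact ⟨b * (c3⁻¹ * c3), ⟨c3, hc3, rfl⟩,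
          nle_mul (nle_refl b) (nle_mul (nle_inv h31) h31),
          nle_mul (nle_refl b) (nle_mul (nle_inv h32) h32)⟩
    have haA : a ∈ upcl GA :=
      ⟨(a * b) * b⁻¹, ⟨a * b, habC, rfl⟩,
        nle_of_mul_idem (idem_aa b) (mul_assoc a b b⁻¹)⟩
    have hbB : b ∈ upcl GB :=
      ⟨b * ((a * b)⁻¹ * (a * b)), ⟨a * b, habC, rfl⟩,
        nle_of_mul_idem (idem_ia (a * b)) rfl⟩
    refine ⟨upcl GA, ⟨hAfil, haA⟩, upcl GB, ⟨hBfil, hbB⟩, ?_, ?_⟩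
    · -- dF A = rF B
      ext x
      constructor
      · rintro ⟨z, ⟨s, hs, t, ht, rfl⟩, hzx⟩
        obtain ⟨g1, ⟨c1, hc1, rfl⟩, h1⟩ := hs
        obtain ⟨g2, ⟨c2, hc2, rfl⟩, h2⟩ := ht
        have h1' : nle (b * c1⁻¹) s := by
          have := nle_inv h1
          rwa [mul_inv_rev', inv_inv', inv_inv'] at this
        obtain ⟨c3, hc3, h31, h32, _⟩ := dir3 hC hc1 hc2 hc2
        have hmemB : b * (c3⁻¹ * c3) ∈ upcl GB := self_mem_upcl ⟨c3, hc3, rfl⟩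
        refine ⟨(b * (c3⁻¹ * c3)) * (b * (c3⁻¹ * c3))⁻¹,
          ⟨b * (c3⁻¹ * c3), hmemB, (b * (c3⁻¹ * c3))⁻¹, ?_, rfl⟩, ?_⟩
        · show ((b * (c3⁻¹ * c3))⁻¹)⁻¹ ∈ upcl GB
          rw [inv_inv']; exact hmemB
        · rw [uu_eq]
          refine nle_trans ?_ hzx
          refine nle_trans ?_ (nle_mul h1' h2)
          exact nle_mul (nle_mul (nle_refl b) (nle_inv h31))
            (nle_mul h32 (nle_refl b⁻¹))
      · rintro ⟨z, ⟨u, hu, v, hv, rfl⟩, hzx⟩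
        obtain ⟨g1, ⟨c1, hc1, rfl⟩, h1⟩ := hu
        obtain ⟨g2, ⟨c2, hc2, rfl⟩, h2⟩ := hv
        have h2' : nle ((c2⁻¹ * c2) * b⁻¹) v := by
          have := nle_inv h2
          rwa [mul_inv_rev', idem_inv (idem_ia c2), inv_inv'] at this
        obtain ⟨c3, hc3, h31, h32, _⟩ := dir3 hC hc1 hc2 hc2
        have hmemA : c3 * b⁻¹ ∈ upcl GA := self_mem_upcl ⟨c3, hc3, rfl⟩
        refine ⟨(b * c3⁻¹) * (c3 * b⁻¹), ⟨b * c3⁻¹, ?_, c3 * b⁻¹, hmemA, rfl⟩, ?_⟩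
        · show (b * c3⁻¹)⁻¹ ∈ upcl GA
          rw [mul_inv_rev', inv_inv']; exact hmemA
        · rw [sandwich]
          refine nle_trans ?_ hzx
          refine nle_trans ?_ (nle_mul h1 h2')
          rw [split3]
          exact nle_mul (nle_mul (nle_refl b) (nle_mul (nle_inv h31) h31))
            (nle_mul (nle_mul (nle_inv h32) h32) (nle_refl b⁻¹))
    · -- C = upcl (smul A B)
      ext x
      constructor
      · intro hx
        obtain ⟨c3, hc3, h3x, h3ab, _⟩ := dir3 hC hx habC habC
        exact ⟨c3, ⟨c3 * b⁻¹, self_mem_upcl ⟨c3, hc3, rfl⟩,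
          b * (c3⁻¹ * c3), self_mem_upcl ⟨c3, hc3, rfl⟩, (zc h3ab).symm⟩, h3x⟩
      · rintro ⟨z, ⟨u, hu, v, hv, rfl⟩, hzx⟩
        obtain ⟨g1, ⟨c1, hc1, rfl⟩, h1⟩ := hu
        obtain ⟨g2, ⟨c2, hc2, rfl⟩, h2⟩ := hv
        obtain ⟨c3, hc3, h31, h32, h3ab⟩ := dir3 hC hc1 hc2 habC
        have hle : nle c3 (u * v) := by
          have step : nle ((c3 * b⁻¹) * (b * (c3⁻¹ * c3)))
              ((c1 * b⁻¹) * (b * (c2⁻¹ * c2))) :=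
            nle_mul (nle_mul h31 (nle_refl b⁻¹))
              (nle_mul (nle_refl b) (nle_mul (nle_inv h32) h32))
          rw [zc h3ab] at step
          exact nle_trans step (nle_mul h1 h2)
        exact hC.2.2.1 c3 hc3 x (nle_trans hle hzx)
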